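/- Let n ≥ 4 and let QD_{2^n} = ⟨a, b : a^{2^{n-1}} = b² = 1, b a b^{-1} = a^{2^{n-2} − 1}⟩ be the quasidihedral group of order 2^n. Then the energy of the commuting graph is E(Γ_{QD_{2^n}}) = 2^n + 2^{n−1} − 6. -/

import Mathlib

open Matrix


open scoped Classical

/-- The commuting graph of a group `G`: its vertices are the non-central
elements of `G`, and two distinct vertices are adjacent iff they commute. -/
noncomputable def commGraph (G : Type*) [Group G] :
    SimpleGraph {g : G // g ∉ Subgroup.center G} where
  Adj x y := x ≠ y ∧ (x : G) * y = (y : G) * x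
  symm := ⟨fun _ _ h => ⟨h.1.symm, h.2.symm⟩⟩
  loopless := ⟨fun _ h => h.1 rfl⟩

lemma adjMatrix_isHermitian {V : Type*} [Fintype V] (Γ : SimpleGraph V) :
    (Γ.adjMatrix ℝ).IsHermitian := by
  ext i j
  simp [Matrix.conjTranspose_apply, SimpleGraph.adj_comm]

/-- The energy of a finite graph: the sum of the absolute values of the
eigenvalues of its adjacency matrix. -/
noncomputable def graphEnergy {V : Type*} [Fintype V] (Γ : SimpleGraph V) : ℝ :=
  ∑ i, |(adjMatrix_isHermitian Γ).eigenvalues i|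

section Spectral
variable {V : Type*} [Fintype V] [DecidableEq V] (A : Matrix V V ℝ)

lemma diag_ofReal (hA : A.IsHermitian) : (diagonal (RCLike.ofReal ∘ hA.eigenvalues) : Matrix V V ℝ)
    = diagonal hA.eigenvalues := by congr 1

lemma conj_helper (hA : A.IsHermitian) (X Y : Matrix V V ℝ) :
    ((hA.eigenvectorUnitary : Matrix V V ℝ) * X * star (hA.eigenvectorUnitary : Matrix V V ℝ)) *
    ((hA.eigenvectorUnitary : Matrix V V ℝ) * Y * star (hA.eigenvectorUnitary : Matrix V V ℝ))
    = (hA.eigenvectorUnitary : Matrix V V ℝ) * (X * Y) * star (hA.eigenvectorUnitary : Matrix V V ℝ) := by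
  set U : Matrix V V ℝ := (hA.eigenvectorUnitary : Matrix V V ℝ)
  have hUU : star U * U = 1 := Unitary.coe_star_mul_self hA.eigenvectorUnitary
  calc (U * X * star U) * (U * Y * star U) = U * (X * ((star U * U) * (Y * star U))) := by
        simp only [mul_assoc]
    _ = U * (X * Y) * star U := by rw [hUU, one_mul]; simp only [mul_assoc]

lemma trace_sq_eq (hA : A.IsHermitian) : (A * A).trace = ∑ i, hA.eigenvalues i ^ 2 := by
  set U : Matrix V V ℝ := (hA.eigenvectorUnitary : Matrix V V ℝ)
  have hUU : star U * U = 1 := Unitary.coe_star_mul_self hA.eigenvectorUnitary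
  have hspec : A = U * diagonal hA.eigenvalues * star U := by
    have := hA.spectral_theorem
    rwa [diag_ofReal] at this
  have h2 : A * A = U * (diagonal hA.eigenvalues * diagonal hA.eigenvalues) * star U := by
    conv_lhs => rw [hspec]
    exact conj_helper A hA _ _
  rw [h2, Matrix.trace_mul_cycle, ← mul_assoc, hUU, one_mul,
    diagonal_mul_diagonal, trace_diagonal]
  exact Finset.sum_congr rfl fun i _ => (sq _).symm

lemma eig_cubic (hA : A.IsHermitian) (c m : ℝ)
    (hP : (A + 1) * (A + 1) * (A + 1) - (c + m) • ((A + 1) * (A + 1)) + (c * m) • (A + 1) = 0)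
    (i : V) :
    (hA.eigenvalues i + 1) * (hA.eigenvalues i + 1 - c) * (hA.eigenvalues i + 1 - m) = 0 := by
  set U : Matrix V V ℝ := (hA.eigenvectorUnitary : Matrix V V ℝ)
  have hUU : star U * U = 1 := Unitary.coe_star_mul_self hA.eigenvectorUnitary
  have hUU' : U * star U = 1 := Unitary.coe_mul_star_self hA.eigenvectorUnitary
  have hspec : A = U * diagonal hA.eigenvalues * star U := by
    have := hA.spectral_theorem
    rwa [diag_ofReal] at this
  set E : Matrix V V ℝ := diagonal (fun i => hA.eigenvalues i + 1) with hE
  have hB : A + 1 = U * E * star U := by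
    rw [hspec, hE]
    have h1 : (diagonal (fun i => hA.eigenvalues i + 1) : Matrix V V ℝ)
        = diagonal hA.eigenvalues + 1 := by
      rw [← diagonal_one, diagonal_add]
    rw [h1, Matrix.mul_add, Matrix.add_mul, Matrix.mul_one, hUU']
  set P : Matrix V V ℝ := E * E * E - (c + m) • (E * E) + (c * m) • E with hPdef
  have key : U * P * star U = 0 := by
    rw [← hP, hB, conj_helper A hA, conj_helper A hA]
    rw [hPdef]
    simp only [Matrix.sub_mul, Matrix.add_mul, Matrix.mul_sub, Matrix.mul_add,
      smul_mul_assoc, mul_smul_comm]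
    rfl
  have hEzero : P = 0 := by
    calc P = (star U * U) * P * (star U * U) := by rw [hUU, one_mul, mul_one]
      _ = star U * (U * P * star U) * U := by simp only [mul_assoc]
      _ = 0 := by rw [key]; simp
  have hii := congrFun (congrFun hEzero i) i
  simp only [hPdef, hE, Matrix.sub_apply, Matrix.add_apply, Matrix.smul_apply,
    diagonal_mul_diagonal, diagonal_apply_eq, smul_eq_mul, Matrix.zero_apply] at hii
  linear_combination hii
end Spectral

section Cliques
variable {V : Type*} [Fintype V] (Γ : SimpleGraph V)

/-- Size of the clique (commuting class) of `x` : number of `y` with `x = y ∨ Adj x y`. -/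
noncomputable def cliqueSize (x : V) : ℕ :=
  (Finset.univ.filter (fun y => x = y ∨ Γ.Adj x y)).card

lemma energy_of_cliques
    (htrans : ∀ x y z : V, Γ.Adj x y → Γ.Adj y z → x ≠ z → Γ.Adj x z)
    (m : ℕ) (hm : 1 ≤ m)
    (hsize : ∀ x : V, cliqueSize Γ x = 2 ∨ cliqueSize Γ x = m) :
    graphEnergy Γ * m = ∑ x : V, ((cliqueSize Γ x : ℝ) - 1)
      + (Fintype.card V : ℝ) * ((m : ℝ) - 1) := by
  classical
  set R : V → V → Prop := fun x y => x = y ∨ Γ.Adj x y with hR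
  have hRrefl : ∀ x, R x x := fun x => Or.inl rfl
  have hRsymm : ∀ {x y}, R x y → R y x := by
    rintro x y (rfl | h); · exact Or.inl rfl
    · exact Or.inr h.symm
  have hRtrans : ∀ {x y z}, R x y → R y z → R x z := by
    rintro x y z (rfl | h1) h2
    · exact h2
    · rcases h2 with rfl | h2
      · exact Or.inr h1
      · by_cases hxz : x = z
        · exact Or.inl hxz
        · exact Or.inr (htrans x y z h1 h2 hxz)
  set A : Matrix V V ℝ := Γ.adjMatrix ℝ with hAdef
  have hA : A.IsHermitian := adjMatrix_isHermitian Γ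
  set B : Matrix V V ℝ := A + 1 with hBdef
  have hBapply : ∀ x y, B x y = if R x y then 1 else 0 := by
    intro x y
    by_cases hxy : x = y
    · subst hxy
      simp [hBdef, hAdef, hRrefl x, Matrix.one_apply]
    · by_cases hadj : Γ.Adj x y
      · simp [hBdef, hAdef, Matrix.one_apply, hxy, hadj, hR]
      · have : ¬ R x y := by rintro (h | h) <;> [exact hxy h; exact hadj h]
        simp [hBdef, hAdef, Matrix.one_apply, hxy, hadj, this]
  have hB2 : ∀ x y, (B * B) x y = (cliqueSize Γ x : ℝ) * B x y := by
    intro x y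
    rw [Matrix.mul_apply]
    by_cases hxy : R x y
    · have h1 : ∀ u : V, B x u * B u y = if R x u then 1 else 0 := by
        intro u
        rw [hBapply, hBapply]
        by_cases h : R x u
        · rw [if_pos h, if_pos (hRtrans (hRsymm h) hxy), one_mul]
        · rw [if_neg h, zero_mul]
      rw [Finset.sum_congr rfl (fun u _ => h1 u)]
      rw [Finset.sum_boole]
      rw [hBapply, if_pos hxy, mul_one, cliqueSize]
    · have h1 : ∀ u : V, B x u * B u y = 0 := by
        intro u
        rw [hBapply, hBapply]
        by_cases h : R x u
        · rw [if_neg (fun h2 => hxy (hRtrans h h2)), mul_zero]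
        · rw [if_neg h, zero_mul]
      rw [Finset.sum_congr rfl (fun u _ => h1 u), Finset.sum_const_zero,
        hBapply, if_neg hxy, mul_zero]
  have hB3 : ∀ x y, (B * B * B) x y = (cliqueSize Γ x : ℝ) ^ 2 * B x y := by
    intro x y
    rw [Matrix.mul_apply]
    have : ∀ u : V, (B * B) x u * B u y = (cliqueSize Γ x : ℝ) * (B x u * B u y) := by
      intro u; rw [hB2, mul_assoc]
    rw [Finset.sum_congr rfl (fun u _ => this u), ← Finset.mul_sum, ← Matrix.mul_apply, hB2]
    ring
  have hP : (A + 1) * (A + 1) * (A + 1) - ((2:ℝ) + m) • ((A + 1) * (A + 1))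
      + ((2:ℝ) * m) • (A + 1) = 0 := by
    rw [← hBdef]
    ext x y
    simp only [Matrix.sub_apply, Matrix.add_apply, Matrix.smul_apply, smul_eq_mul,
      Matrix.zero_apply, hB2, hB3]
    rcases hsize x with h | h <;> rw [h] <;> push_cast <;> ring
  have hcubic := fun i => eig_cubic A hA 2 m hP i
  have habs : ∀ i : V, |hA.eigenvalues i| * m = hA.eigenvalues i ^ 2 + ((m : ℝ) - 1) := by
    intro i
    have h := hcubic i
    have hm1 : (1:ℝ) ≤ (m:ℝ) := by exact_mod_cast hm
    rcases mul_eq_zero.1 h with h12 | h3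
    · rcases mul_eq_zero.1 h12 with h1 | h2
      · have : hA.eigenvalues i = -1 := by linarith
        rw [this]; rw [abs_of_nonpos (by norm_num)]; ring
      · have : hA.eigenvalues i = 1 := by linarith
        rw [this]; rw [abs_one]; ring
    · have : hA.eigenvalues i = (m:ℝ) - 1 := by linarith
      rw [this, abs_of_nonneg (by linarith)]; ring
  have htr : ∑ i, hA.eigenvalues i ^ 2 = ∑ x : V, ((cliqueSize Γ x : ℝ) - 1) := by
    rw [← trace_sq_eq A hA, Matrix.trace]
    apply Finset.sum_congr rfl
    intro x _
    have h1 : (B * B) x x = (A * A) x x + 2 * A x x + 1 := by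
      simp only [hBdef, Matrix.add_mul, Matrix.mul_add, Matrix.mul_one, Matrix.one_mul,
        Matrix.add_apply, Matrix.one_apply_eq]
      ring
    have h2 : A x x = 0 := by simp [hAdef]
    have h3 : (B * B) x x = (cliqueSize Γ x : ℝ) := by
      rw [hB2, hBapply, if_pos (hRrefl x), mul_one]
    simp only [Matrix.diag_apply]
    rw [← h3, h1, h2]; ring
  calc graphEnergy Γ * m = ∑ i, |hA.eigenvalues i| * m := by
        rw [graphEnergy, Finset.sum_mul]
    _ = ∑ i, (hA.eigenvalues i ^ 2 + ((m:ℝ) - 1)) := Finset.sum_congr rfl fun i _ => habs i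
    _ = ∑ i, hA.eigenvalues i ^ 2 + (Fintype.card V : ℝ) * ((m:ℝ) - 1) := by
        rw [Finset.sum_add_distrib, Finset.sum_const, Finset.card_univ, nsmul_eq_mul]
    _ = ∑ x : V, ((cliqueSize Γ x : ℝ) - 1) + (Fintype.card V : ℝ) * ((m:ℝ) - 1) := by rw [htr]
end Cliques

/-- The energy of the commuting graph of the quasidihedral group
`QD_{2^n} = ⟨a, b : a^(2^(n-1)) = b² = 1, b a b⁻¹ = a^(2^(n-2) - 1)⟩` of order `2^n`,
`n ≥ 4`. -/
theorem energy_commGraph_quasidihedral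
    (n : ℕ) (hn : 4 ≤ n)
    (G : Type*) [Group G] [Fintype G] (a b : G)
    (ha : a ^ (2 ^ (n - 1)) = 1) (hb : b ^ 2 = 1)
    (hrel : b * a * b⁻¹ = a ^ (2 ^ (n - 2) - 1))
    (hgen : Subgroup.closure ({a, b} : Set G) = ⊤)
    (hcard : Fintype.card G = 2 ^ n) :
    graphEnergy (commGraph G) = 2 ^ n + 2 ^ (n - 1) - (6 : ℝ) := by
  classical
  set K : ℕ := 2 ^ (n - 2) with hKdef
  set N1 : ℕ := 2 ^ (n - 1) with hN1def
  set E : ℕ := 2 ^ (n - 3) with hEdef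
  have hK4 : 4 ≤ K := by
    rw [hKdef]
    calc (4:ℕ) = 2^2 := rfl
    _ ≤ 2 ^ (n-2) := Nat.pow_le_pow_right (by norm_num) (by omega)
  have hN1K : N1 = 2 * K := by
    rw [hKdef, hN1def, ← pow_succ']; congr 1; omega
  have hKE : K = 2 * E := by
    rw [hKdef, hEdef, ← pow_succ']; congr 1; omega
  have hEeven : 2 ∣ E := by
    rw [hEdef]; exact dvd_pow_self 2 (by omega)
  have h2n : 2 ^ n = N1 * 2 := by
    rw [hN1def, ← pow_succ]; congr 1; omega
  have hE1 : 2 ≤ E := by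
    rw [hEdef]
    calc (2:ℕ) = 2^1 := rfl
    _ ≤ 2 ^ (n-3) := Nat.pow_le_pow_right (by norm_num) (by omega)
  clear_value K N1 E
  have hN1pos : 0 < N1 := by omega
  haveI : NeZero N1 := ⟨by omega⟩
  have hbb : b * b = 1 := by rw [← sq]; exact hb
  have hbinv : b⁻¹ = b := inv_eq_of_mul_eq_one_right hbb
  have hared : ∀ i : ℕ, a ^ i = a ^ (i % N1) := by
    intro i
    conv_lhs => rw [← Nat.div_add_mod i N1]
    rw [pow_add, pow_mul, ha, one_pow, one_mul]
  have hconj : ∀ i : ℕ, b * a ^ i * b = a ^ ((K - 1) * i) := by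
    intro i
    have h := (conj_pow (a := b) (b := a) (i := i)).symm
    rw [hrel, ← pow_mul, hbinv] at h
    exact h
  have hmulba : ∀ j : ℕ, b * a ^ j = a ^ ((K - 1) * j) * b := by
    intro j
    have := hconj j
    calc b * a ^ j = (b * a ^ j * b) * b := by rw [mul_assoc, hbb, mul_one]
      _ = a ^ ((K - 1) * j) * b := by rw [this]
  -- every element has the form a^i or a^i * b
  have hall : ∀ g : G, ∃ i : ℕ, g = a ^ i ∨ g = a ^ i * b := by
    have haInv : ∀ i : ℕ, (a ^ i)⁻¹ = a ^ (N1 * i - i) := by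
      intro i
      refine inv_eq_of_mul_eq_one_right ?_
      rw [← pow_add]
      have h1 : i + (N1 * i - i) = N1 * i := by
        have : i ≤ N1 * i := Nat.le_mul_of_pos_left i hN1pos
        omega
      rw [h1, pow_mul, ha, one_pow]
    let T : Subgroup G :=
      { carrier := {g | ∃ i : ℕ, g = a ^ i ∨ g = a ^ i * b}
        one_mem' := ⟨0, Or.inl (pow_zero a).symm⟩
        mul_mem' := by
          rintro x y ⟨i, rfl | rfl⟩ ⟨j, rfl | rfl⟩
          · exact ⟨i + j, Or.inl (pow_add a i j).symm⟩
          · exact ⟨i + j, Or.inr (by rw [← mul_assoc, ← pow_add])⟩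
          · refine ⟨i + (K - 1) * j, Or.inr ?_⟩
            rw [mul_assoc, hmulba, ← mul_assoc, ← pow_add]
          · refine ⟨i + (K - 1) * j, Or.inl ?_⟩
            have h1 : a ^ i * b * (a ^ j * b) = a ^ i * (b * a ^ j) * b := by
              simp only [mul_assoc]
            rw [h1, hmulba, ← mul_assoc, ← pow_add, mul_assoc, hbb, mul_one]
        inv_mem' := by
          rintro x ⟨i, rfl | rfl⟩
          · exact ⟨N1 * i - i, Or.inl (haInv i)⟩
          · refine ⟨(K - 1) * (N1 * i - i), Or.inr ?_⟩
            rw [_root_.mul_inv_rev, haInv, hbinv, hmulba] }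
    intro g
    have hT : g ∈ T := by
      have : Subgroup.closure ({a, b} : Set G) ≤ T := by
        rw [Subgroup.closure_le]
        rintro x hx
        rcases hx with hx | hx
        · exact ⟨1, Or.inl (by rw [hx, pow_one])⟩
        · exact ⟨0, Or.inr (by rw [hx, pow_zero, one_mul])⟩
      rw [hgen] at this
      exact this (Subgroup.mem_top g)
    exact hT
  -- the parametrization
  set φ : ZMod N1 × ZMod 2 → G := fun p => a ^ p.1.val * b ^ p.2.val with hφdef
  set ψ : ZMod N1 → G := fun x => a ^ x.val with hψdef
  have hψnat : ∀ i : ℕ, a ^ i = ψ (i : ZMod N1) := by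
    intro i
    rw [hψdef]; simp only []
    rw [ZMod.val_natCast, ← hared]
  have hφ0 : ∀ j : ZMod N1, φ (j, 0) = ψ j := by
    intro j; rw [hφdef, hψdef]; simp [ZMod.val_zero]
  have hφ1 : ∀ j : ZMod N1, φ (j, 1) = ψ j * b := by
    intro j; rw [hφdef, hψdef]
    simp only []
    rw [ZMod.val_one _, pow_one]
  have hφsurj : Function.Surjective φ := by
    intro g
    rcases hall g with ⟨i, rfl | rfl⟩
    · exact ⟨((i : ZMod N1), 0), by rw [hφ0, ← hψnat]⟩
    · exact ⟨((i : ZMod N1), 1), by rw [hφ1, ← hψnat]⟩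
  have hcards : Fintype.card (ZMod N1 × ZMod 2) = Fintype.card G := by
    rw [Fintype.card_prod, ZMod.card, ZMod.card, hcard, h2n]
  have hφbij : Function.Bijective φ :=
    (Fintype.bijective_iff_surjective_and_card φ).2 ⟨hφsurj, hcards⟩
  have hψinj : Function.Injective ψ := by
    intro x y hxy
    have : φ (x, 0) = φ (y, 0) := by rw [hφ0, hφ0, hxy]
    exact (Prod.ext_iff.1 (hφbij.1 this)).1
  have hψbinj : ∀ x y : ZMod N1, ψ x * b = ψ y * b → x = y := by
    intro x y hxy
    have : φ (x, 1) = φ (y, 1) := by rw [hφ1, hφ1, hxy]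
    exact (Prod.ext_iff.1 (hφbij.1 this)).1
  have hne : ∀ x y : ZMod N1, ψ x * b ≠ ψ y := by
    intro x y hxy
    have : φ (x, 1) = φ (y, 0) := by rw [hφ1, hφ0]; exact hxy
    have h2 := (Prod.ext_iff.1 (hφbij.1 this)).2
    exact one_ne_zero h2
  have hψ0 : ψ 0 = 1 := by
    rw [hψdef]; simp only []; rw [ZMod.val_zero, pow_zero]
  have hψmul : ∀ x y : ZMod N1, ψ x * ψ y = ψ (x + y) := by
    intro x y
    rw [hψdef]; simp only []
    rw [← pow_add, hψnat (x.val + y.val)]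
    rw [hψdef]; simp only []
    congr 1
    push_cast [ZMod.natCast_val, ZMod.cast_id]
    ring
  have hψb : ∀ x : ZMod N1, b * ψ x = ψ (((K - 1 : ℕ) : ZMod N1) * x) * b := by
    intro x
    rw [hψdef]; simp only []
    rw [hmulba, hψnat ((K-1) * x.val)]
    congr 2
    push_cast [ZMod.natCast_val, ZMod.cast_id]
    ring
  set κ : ZMod N1 := ((K : ℕ) : ZMod N1) with hκdef
  have hκne : κ ≠ 0 := by
    rw [hκdef, Ne, ZMod.natCast_eq_zero_iff]
    intro hdvd
    have := Nat.le_of_dvd (by omega) hdvd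
    omega
  have hκκ : κ + κ = 0 := by
    rw [hκdef, ← Nat.cast_add, ZMod.natCast_eq_zero_iff]
    exact ⟨1, by omega⟩
  have hone : (1 : ZMod N1) ≠ 0 := by
    have : ((1:ℕ) : ZMod N1) ≠ 0 := by
      rw [Ne, ZMod.natCast_eq_zero_iff]
      intro hdvd
      have := Nat.le_of_dvd (by omega) hdvd
      omega
    simpa using this
  have honeκ : (1 : ZMod N1) ≠ κ := by
    intro h
    have : ((1:ℕ) : ZMod N1) = ((K:ℕ) : ZMod N1) := by simpa [hκdef] using h
    have h2 := congrArg ZMod.val this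
    rw [ZMod.val_cast_of_lt (by omega), ZMod.val_cast_of_lt (by omega)] at h2
    omega
  -- key ZMod computation
  have hxid : ∀ x : ZMod N1, ((x.val : ℕ) : ZMod N1) = x := by
    intro x; rw [ZMod.natCast_val, ZMod.cast_id]
  have hkey : ∀ x : ZMod N1, x * ((K - 2 : ℕ) : ZMod N1) = 0 ↔ x = 0 ∨ x = κ := by
    have hunit : IsUnit ((E - 1 : ℕ) : ZMod N1) := by
      rw [ZMod.isUnit_iff_coprime]
      have hodd : Odd (E - 1) := by
        rcases hEeven with ⟨t, ht⟩
        exact ⟨t - 1, by omega⟩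
      have h2 : Nat.Coprime (E - 1) 2 := Nat.coprime_two_right.2 hodd
      rw [hN1def]
      exact h2.pow_right _
    have hfact : (K - 2 : ℕ) = 2 * (E - 1) := by omega
    intro x
    rw [hfact]
    push_cast
    set u : ZMod N1 := ((E - 1 : ℕ) : ZMod N1) with hudef
    constructor
    · intro h
      have h2 : x * 2 = 0 := by
        have h1 : (x * 2) * u = 0 := by rw [mul_assoc]; exact h
        exact hunit.mul_left_eq_zero.1 h1
      have h3 : ((2 * x.val : ℕ) : ZMod N1) = 0 := by
        push_cast [hxid]
        rw [mul_comm]; exact h2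
      have h4 : N1 ∣ 2 * x.val := (ZMod.natCast_eq_zero_iff _ _).1 h3
      rcases h4 with ⟨t, ht⟩
      have hvlt : x.val < N1 := ZMod.val_lt x
      have htlt : t < 2 := by
        have hm : N1 * t < N1 * 2 := by omega
        exact Nat.lt_of_mul_lt_mul_left hm
      interval_cases t
      · left
        have : x.val = 0 := by omega
        rw [← hxid x, this, Nat.cast_zero]
      · right
        have : x.val = K := by omega
        rw [← hxid x, this, hκdef]
    · rintro (rfl | rfl)
      · rw [zero_mul]
      · have : κ * (2 * u) = (κ + κ) * u := by ring
        rw [this, hκκ, zero_mul]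
  set ρ : ZMod N1 := ((K - 1 : ℕ) : ZMod N1) with hρdef
  have hψb' : ∀ x : ZMod N1, b * ψ x = ψ (ρ * x) * b := hψb
  have hbpsi2 : ∀ x y : ZMod N1, (ψ x * b) * ψ y = ψ (x + ρ * y) * b := by
    intro x y
    calc ψ x * b * ψ y = ψ x * (b * ψ y) := by rw [mul_assoc]
      _ = ψ x * (ψ (ρ * y) * b) := by rw [hψb']
      _ = ψ x * ψ (ρ * y) * b := by rw [mul_assoc]
      _ = ψ (x + ρ * y) * b := by rw [hψmul]
  have hbpsi : ∀ x y : ZMod N1, (ψ x * b) * (ψ y * b) = ψ (x + ρ * y) := by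
    intro x y
    calc ψ x * b * (ψ y * b) = (ψ x * b * ψ y) * b := by rw [← mul_assoc]
      _ = ψ (x + ρ * y) * b * b := by rw [hbpsi2]
      _ = ψ (x + ρ * y) := by rw [mul_assoc, hbb, mul_one]
  have hρ1 : ∀ x : ZMod N1, ρ * x - x = x * ((K - 2 : ℕ) : ZMod N1) := by
    intro x
    have h : (K - 1 : ℕ) = (K - 2) + 1 := by omega
    rw [hρdef, h, Nat.cast_add, Nat.cast_one]; ring
  have hcomm1 : ∀ x y : ZMod N1, ψ x * ψ y = ψ y * ψ x := by
    intro x y; rw [hψmul, hψmul, add_comm]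
  have hcomm2 : ∀ x y : ZMod N1,
      (ψ x * (ψ y * b) = (ψ y * b) * ψ x) ↔ (x = 0 ∨ x = κ) := by
    intro x y
    rw [← mul_assoc, hψmul, hbpsi2]
    constructor
    · intro h
      have h2 := hψbinj _ _ h
      have h3 : ρ * x - x = 0 := by linear_combination -h2
      rw [hρ1] at h3
      exact (hkey x).1 h3
    · intro h
      have h4 : ρ * x = x := by
        have h3 : ρ * x - x = 0 := by rw [hρ1]; exact (hkey x).2 h
        have := sub_eq_zero.1 h3
        exact this
      rw [h4, add_comm]
  have hcomm3 : ∀ x y : ZMod N1,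
      ((ψ x * b) * (ψ y * b) = (ψ y * b) * (ψ x * b)) ↔ (y = x ∨ y = x + κ) := by
    intro x y
    rw [hbpsi, hbpsi]
    constructor
    · intro h
      have h2 := hψinj h
      have h3 : (x - y) * ((K - 2 : ℕ) : ZMod N1) = 0 := by
        rw [← hρ1]; linear_combination -h2
      rcases (hkey (x - y)).1 h3 with h | h
      · left
        have := sub_eq_zero.1 h
        exact this.symm
      · right
        have hxy : x = y + κ := by
          have : x - y = κ := h
          rw [← this]; ring
        rw [hxy]
        have : y + κ + κ = y + (κ + κ) := by ring
        rw [this, hκκ, add_zero]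
    · intro h
      rcases h with rfl | rfl
      · rfl
      · congr 1
        have hρκ : ρ * κ = κ := by
          have h3 : κ * ((K - 2 : ℕ) : ZMod N1) = 0 := (hkey κ).2 (Or.inr rfl)
          have := hρ1 κ
          rw [h3] at this
          exact sub_eq_zero.1 this
        rw [mul_add, hρκ]
        ring
  -- the center
  have hψκcen : ψ κ ∈ Subgroup.center G := by
    rw [Subgroup.mem_center_iff]
    intro h
    rcases hall h with ⟨i, rfl | rfl⟩
    · rw [hψnat]; exact hcomm1 _ _
    · rw [hψnat]
      exact ((hcomm2 κ _).2 (Or.inr rfl)).symm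
  have hcen : ∀ g : G, g ∈ Subgroup.center G ↔ (g = 1 ∨ g = ψ κ) := by
    intro g
    constructor
    · intro hg
      rw [Subgroup.mem_center_iff] at hg
      rcases hall g with ⟨i, rfl | rfl⟩
      · rw [hψnat] at *
        have h1 := (hg (ψ 0 * b)).symm
        rcases (hcomm2 _ 0).1 h1 with h | h
        · left; rw [h, hψ0]
        · right; rw [h]
      · exfalso
        rw [hψnat] at hg
        have h1 := hg a
        have h2 : a = ψ ((1:ℕ) : ZMod N1) := by rw [← hψnat, pow_one]
        rw [h2] at h1
        have h3 := (hcomm2 ((1:ℕ) : ZMod N1) _).1 h1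
        simp only [Nat.cast_one] at h3
        rcases h3 with h | h
        · exact hone h
        · exact honeκ h
    · rintro (rfl | rfl)
      · exact Subgroup.one_mem _
      · exact hψκcen
  -- non-centrality facts
  have hncb : ∀ x : ZMod N1, (ψ x * b) ∉ Subgroup.center G := by
    intro x hmem
    rcases (hcen _).1 hmem with h | h
    · exact hne x 0 (by rw [h, hψ0])
    · exact hne x κ h
  have hnca : ∀ x : ZMod N1, (ψ x ∉ Subgroup.center G) ↔ (x ≠ 0 ∧ x ≠ κ) := by
    intro x
    rw [hcen]
    constructor
    · intro h
      constructor
      · rintro rfl; exact h (Or.inl hψ0)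
      · rintro rfl; exact h (Or.inr rfl)
    · rintro ⟨h0, hκ⟩ (h | h)
      · exact h0 (hψinj (by rw [h, hψ0]))
      · exact hκ (hψinj h)
  set Γ : SimpleGraph {g : G // g ∉ Subgroup.center G} := commGraph G with hΓdef
  have he2 : ∀ e : ZMod 2, e = 0 ∨ e = 1 := by decide
  -- transitivity
  have htrans : ∀ x y z : {g : G // g ∉ Subgroup.center G},
      Γ.Adj x y → Γ.Adj y z → x ≠ z → Γ.Adj x z := by
    intro x y z hxy hyz hxz
    rcases hall y.val with ⟨i, hyv | hyv⟩ <;> rw [hψnat] at hyv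
    · -- y = ψ w
      set w : ZMod N1 := ((i : ℕ) : ZMod N1) with hwdef
      have hw : w ≠ 0 ∧ w ≠ κ := (hnca w).1 (hyv ▸ y.2)
      have hxa : ∃ u : ZMod N1, x.val = ψ u := by
        rcases hall x.val with ⟨j, hxv | hxv⟩ <;> rw [hψnat] at hxv
        · exact ⟨_, hxv⟩
        · exfalso
          have hc := (show _ ∧ _ from hxy).2
          rw [hxv, hyv] at hc
          rcases (hcomm2 w _).1 hc.symm with h | h
          · exact hw.1 h
          · exact hw.2 h
      have hza : ∃ v : ZMod N1, z.val = ψ v := by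
        rcases hall z.val with ⟨j, hzv | hzv⟩ <;> rw [hψnat] at hzv
        · exact ⟨_, hzv⟩
        · exfalso
          have hc := (show _ ∧ _ from hyz).2
          rw [hzv, hyv] at hc
          rcases (hcomm2 w _).1 hc with h | h
          · exact hw.1 h
          · exact hw.2 h
      rcases hxa with ⟨u, hxv⟩
      rcases hza with ⟨v, hzv⟩
      exact (show x ≠ z ∧ (x : G) * z = (z : G) * x from ⟨hxz, by rw [hxv, hzv]; exact hcomm1 u v⟩)
    · -- y = ψ w * b
      set w : ZMod N1 := ((i : ℕ) : ZMod N1) with hwdef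
      have hxb : ∃ u : ZMod N1, x.val = ψ u * b := by
        rcases hall x.val with ⟨j, hxv | hxv⟩ <;> rw [hψnat] at hxv
        · exfalso
          have hc := (show _ ∧ _ from hxy).2
          rw [hxv, hyv] at hc
          have h2 := (hcomm2 _ w).1 hc
          exact ((hnca _).1 (hxv ▸ x.2)).elim (fun h0 hκ2 => by
            rcases h2 with h | h
            · exact h0 h
            · exact hκ2 h)
        · exact ⟨_, hxv⟩
      have hzb : ∃ v : ZMod N1, z.val = ψ v * b := by
        rcases hall z.val with ⟨j, hzv | hzv⟩ <;> rw [hψnat] at hzv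
        · exfalso
          have hc := (show _ ∧ _ from hyz).2
          rw [hzv, hyv] at hc
          have h2 := (hcomm2 _ w).1 hc.symm
          exact ((hnca _).1 (hzv ▸ z.2)).elim (fun h0 hκ2 => by
            rcases h2 with h | h
            · exact h0 h
            · exact hκ2 h)
        · exact ⟨_, hzv⟩
      rcases hxb with ⟨u, hxv⟩
      rcases hzb with ⟨v, hzv⟩
      have h1 : w = u ∨ w = u + κ := by
        have hc := (show _ ∧ _ from hxy).2
        rw [hxv, hyv] at hc
        exact (hcomm3 u w).1 hc
      have h2 : v = w ∨ v = w + κ := by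
        have hc := (show _ ∧ _ from hyz).2
        rw [hyv, hzv] at hc
        exact (hcomm3 w v).1 hc
      have h3 : v = u ∨ v = u + κ := by
        rcases h1 with h1 | h1 <;> rcases h2 with h2 | h2
        · left; rw [h2, h1]
        · right; rw [h2, h1]
        · right; rw [h2, h1]
        · left; rw [h2, h1, add_assoc, hκκ, add_zero]
      rcases h3 with h3 | h3
      · exact absurd (Subtype.ext (by rw [hxv, hzv, h3])) hxz
      · exact (show x ≠ z ∧ (x : G) * z = (z : G) * x from ⟨hxz, by rw [hxv, hzv]; exact (hcomm3 u v).2 (Or.inr h3)⟩)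
  -- counting: transfer cliqueSize to a count over P
  set C : G → ℕ := fun g => (Finset.univ.filter
    (fun p : (ZMod N1 × ZMod 2) => φ p ∉ Subgroup.center G ∧ g * φ p = φ p * g)).card with hCdef
  have hcount : ∀ x : {g : G // g ∉ Subgroup.center G}, cliqueSize Γ x = C x.val := by
    intro x
    have h1 : cliqueSize Γ x = (Finset.univ.filter
        (fun y : {g : G // g ∉ Subgroup.center G} => (x : G) * y = (y : G) * x)).card := by
      rw [cliqueSize]
      congr 1
      ext y
      simp only [Finset.mem_filter, Finset.mem_univ, true_and]
      constructor
      · rintro (rfl | hadj)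
        · rfl
        · exact (show _ ∧ _ from hadj).2
      · intro hcomm
        by_cases hxy : x = y
        · exact Or.inl hxy
        · exact Or.inr (show x ≠ y ∧ (x : G) * y = (y : G) * x from ⟨hxy, hcomm⟩)
    rw [h1]
    simp only [hCdef]
    rw [← Fintype.card_subtype, ← Fintype.card_subtype]
    exact Fintype.card_congr ((Equiv.subtypeSubtypeEquivSubtypeInter _ _).trans
      (((Equiv.ofBijective φ hφbij).subtypeEquiv (fun p => Iff.rfl) :
        {p : ZMod N1 × ZMod 2 //
          φ p ∉ Subgroup.center G ∧ (x : G) * φ p = φ p * (x : G)} ≃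
        {g : G // g ∉ Subgroup.center G ∧ (x : G) * g = g * (x : G)}).symm))
  have hκne' : ((0 : ZMod N1), (0 : ZMod 2)) ≠ (κ, 0) := by
    intro h
    exact hκne ((Prod.ext_iff.1 h).1).symm
  have hC1 : ∀ u : ZMod N1, u ≠ 0 → u ≠ κ → C (ψ u) = N1 - 2 := by
    intro u hu0 huκ
    have hset : (Finset.univ.filter
        (fun p : (ZMod N1 × ZMod 2) => φ p ∉ Subgroup.center G ∧ ψ u * φ p = φ p * ψ u))
        = (Finset.univ.filter (fun j : ZMod N1 => ¬(j = 0 ∨ j = κ))).image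
          (fun j => ((j, 0) : (ZMod N1 × ZMod 2))) := by
      ext ⟨j, e⟩
      simp only [Finset.mem_filter, Finset.mem_univ, true_and, Finset.mem_image]
      constructor
      · rintro ⟨hnc, hcm⟩
        rcases he2 e with rfl | rfl
        · refine ⟨j, ?_, rfl⟩
          rw [hφ0] at hnc
          have := (hnca j).1 hnc
          tauto
        · exfalso
          rw [hφ1] at hcm
          rcases (hcomm2 u j).1 hcm with h | h
          · exact hu0 h
          · exact huκ h
      · rintro ⟨j', hj', hjj⟩
        have hj2 : j' = j ∧ (0 : ZMod 2) = e := Prod.ext_iff.1 hjj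
        rcases hj2 with ⟨rfl, he⟩
        rw [← he, hφ0]
        refine ⟨(hnca _).2 (by tauto), hcomm1 _ _⟩
    rw [hCdef]
    simp only []
    rw [hset, Finset.card_image_of_injective _ (fun j1 j2 h => (Prod.ext_iff.1 h).1)]
    have hset2 : (Finset.univ.filter (fun j : ZMod N1 => ¬(j = 0 ∨ j = κ)))
        = Finset.univ \ {0, κ} := by
      ext j
      simp only [Finset.mem_filter, Finset.mem_univ, true_and, Finset.mem_sdiff,
        Finset.mem_insert, Finset.mem_singleton]
    rw [hset2, Finset.card_sdiff_of_subset (Finset.subset_univ _),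
      Finset.card_pair (Ne.symm hκne), Finset.card_univ, ZMod.card]
  have hC2 : ∀ u : ZMod N1, C (ψ u * b) = 2 := by
    intro u
    have huκ : u ≠ u + κ := by
      intro h
      exact hκne (by linear_combination -h)
    have hset : (Finset.univ.filter
        (fun p : (ZMod N1 × ZMod 2) => φ p ∉ Subgroup.center G ∧ (ψ u * b) * φ p = φ p * (ψ u * b)))
        = ({((u, 1) : (ZMod N1 × ZMod 2)), ((u + κ, 1) : (ZMod N1 × ZMod 2))} : Finset (ZMod N1 × ZMod 2)) := by
      ext ⟨j, e⟩
      simp only [Finset.mem_filter, Finset.mem_univ, true_and, Finset.mem_insert,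
        Finset.mem_singleton, Prod.mk.injEq]
      constructor
      · rintro ⟨hnc, hcm⟩
        rcases he2 e with rfl | rfl
        · exfalso
          rw [hφ0] at hnc hcm
          rcases (hcomm2 j u).1 hcm.symm with h | h
          · exact ((hnca j).1 hnc).1 h
          · exact ((hnca j).1 hnc).2 h
        · rw [hφ1] at hcm
          rcases (hcomm3 u j).1 hcm with h | h
          · exact Or.inl ⟨h, rfl⟩
          · exact Or.inr ⟨h, rfl⟩
      · rintro (⟨rfl, rfl⟩ | ⟨rfl, rfl⟩)
        · exact ⟨by rw [hφ1]; exact hncb _, by rw [hφ1]⟩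
        · exact ⟨by rw [hφ1]; exact hncb _,
            by rw [hφ1]; exact (hcomm3 _ _).2 (Or.inr rfl)⟩
    rw [hCdef]
    simp only []
    rw [hset]
    exact Finset.card_pair (by simp [Prod.ext_iff, huκ])
  have hsize : ∀ x : {g : G // g ∉ Subgroup.center G},
      cliqueSize Γ x = 2 ∨ cliqueSize Γ x = N1 - 2 := by
    intro x
    rcases hall x.val with ⟨i, hxv | hxv⟩ <;> rw [hψnat] at hxv
    · right
      rw [hcount, hxv]
      have h := (hnca _).1 (hxv ▸ x.2)
      exact hC1 _ h.1 h.2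
    · left
      rw [hcount, hxv]
      exact hC2 _
  -- description of the central points in P
  have hZset : (Finset.univ.filter (fun p : (ZMod N1 × ZMod 2) => φ p ∉ Subgroup.center G))
      = Finset.univ \ {((0 : ZMod N1), (0 : ZMod 2)), (κ, 0)} := by
    ext ⟨j, e⟩
    simp only [Finset.mem_filter, Finset.mem_univ, true_and, Finset.mem_sdiff,
      Finset.mem_insert, Finset.mem_singleton, Prod.mk.injEq]
    rcases he2 e with rfl | rfl
    · rw [hφ0, hnca]
      constructor
      · rintro ⟨h0, hκ2⟩
        push_neg
        exact ⟨fun h => absurd h h0, fun h => absurd h hκ2⟩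
      · intro h
        push_neg at h
        exact ⟨fun h2 => absurd rfl (h.1 h2), fun h2 => absurd rfl (h.2 h2)⟩
    · constructor
      · intro _
        push_neg
        constructor <;> (intro; intro h; exact absurd h (by decide))
      · intro _
        rw [hφ1]
        exact hncb j
  have hPcard : Fintype.card (ZMod N1 × ZMod 2) = N1 * 2 := by
    rw [Fintype.card_prod, ZMod.card, ZMod.card]
  have hVcard : Fintype.card {g : G // g ∉ Subgroup.center G} = N1 * 2 - 2 := by
    rw [Fintype.card_subtype]
    have h1 : (Finset.univ.filter (fun g : G => g ∉ Subgroup.center G)).card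
        = (Finset.univ.filter (fun p : (ZMod N1 × ZMod 2) => φ p ∉ Subgroup.center G)).card := by
      rw [← Fintype.card_subtype, ← Fintype.card_subtype]
      exact Fintype.card_congr ((Equiv.ofBijective φ hφbij).subtypeEquiv
        (fun p => Iff.rfl)).symm
    rw [h1, hZset, Finset.card_sdiff_of_subset (Finset.subset_univ _), Finset.card_univ,
      Finset.card_pair hκne', hPcard]
  -- the sum of (cliqueSize - 1)
  set F : (ZMod N1 × ZMod 2) → ℝ := fun p => if p.2 = 1 then 1 else ((N1 : ℝ) - 3) with hFdef
  set eqV : {p : ZMod N1 × ZMod 2 // φ p ∉ Subgroup.center G} ≃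
      {g : G // g ∉ Subgroup.center G} :=
    (Equiv.ofBijective φ hφbij).subtypeEquiv (fun p => Iff.rfl) with heqV
  have hFval : ∀ q : {p : ZMod N1 × ZMod 2 // φ p ∉ Subgroup.center G},
      ((cliqueSize Γ (eqV q) : ℝ) - 1) = F q.val := by
    rintro ⟨⟨j, e⟩, hq⟩
    have hveq : (eqV ⟨(j, e), hq⟩).val = φ (j, e) := rfl
    rcases he2 e with rfl | rfl
    · have hnc : ψ j ∉ Subgroup.center G := by rw [← hφ0 j]; exact hq
      have hclique : cliqueSize Γ (eqV ⟨(j, 0), hq⟩) = N1 - 2 := by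
        rw [hcount, hveq, hφ0]
        exact hC1 j ((hnca j).1 hnc).1 ((hnca j).1 hnc).2
      rw [hclique, hFdef]
      simp only []
      rw [if_neg (by decide), Nat.cast_sub (by omega)]
      push_cast
      ring
    · have hclique : cliqueSize Γ (eqV ⟨(j, 1), hq⟩) = 2 := by
        rw [hcount, hveq, hφ1]
        exact hC2 j
      rw [hclique, hFdef]
      norm_num
  have hFsum : ∑ p : (ZMod N1 × ZMod 2), F p = (N1 : ℝ) * ((N1 : ℝ) - 2) := by
    rw [Fintype.sum_prod_type]
    have hinner : ∀ j : ZMod N1, ∑ e : ZMod 2, F (j, e) = (N1 : ℝ) - 2 := by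
      intro j
      rw [show (Finset.univ : Finset (ZMod 2)) = {0, 1} by decide]
      rw [Finset.sum_pair (by decide)]
      have e0 : F (j, 0) = (N1 : ℝ) - 3 := by
        rw [hFdef]; simp only []; rw [if_neg (by decide)]
      have e1 : F (j, 1) = 1 := by
        rw [hFdef]; norm_num
      rw [e0, e1]
      ring
    rw [Finset.sum_congr rfl (fun j _ => hinner j), Finset.sum_const, Finset.card_univ,
      ZMod.card, nsmul_eq_mul]
  have hsum : ∑ x : {g : G // g ∉ Subgroup.center G}, ((cliqueSize Γ x : ℝ) - 1)
      = (N1 : ℝ) * ((N1 : ℝ) - 2) - 2 * ((N1 : ℝ) - 3) := by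
    rw [← Equiv.sum_comp eqV (fun x => ((cliqueSize Γ x : ℝ) - 1))]
    rw [Finset.sum_congr rfl (fun q _ => hFval q)]
    rw [← Finset.sum_subtype (Finset.univ.filter
      (fun p : (ZMod N1 × ZMod 2) => φ p ∉ Subgroup.center G))
      (fun p => by simp) F]
    rw [hZset, Finset.sum_sdiff_eq_sub (Finset.subset_univ _), hFsum,
      Finset.sum_pair hκne']
    have e0 : F (0, 0) = (N1 : ℝ) - 3 := by
      rw [hFdef]; simp only []; rw [if_neg (by decide)]
    have e1 : F (κ, 0) = (N1 : ℝ) - 3 := by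
      rw [hFdef]; simp only []; rw [if_neg (by decide)]
    simp only [e0, e1]
    ring
  -- apply the master lemma
  have hm1 : 1 ≤ N1 - 2 := by omega
  have hmain := energy_of_cliques Γ htrans (N1 - 2) hm1 hsize
  rw [hsum, hVcard] at hmain
  have hNc : ((N1 - 2 : ℕ) : ℝ) = (N1 : ℝ) - 2 := by
    rw [Nat.cast_sub (by omega)]; norm_num
  have hNc2 : ((N1 * 2 - 2 : ℕ) : ℝ) = (N1 : ℝ) * 2 - 2 := by
    rw [Nat.cast_sub (by omega)]; push_cast; ring
  rw [hNc, hNc2] at hmain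
  have hfinal : graphEnergy Γ = 3 * (N1 : ℝ) - 6 := by
    have hne2 : (N1 : ℝ) - 2 ≠ 0 := by
      have : (8 : ℝ) ≤ (N1 : ℝ) := by exact_mod_cast (by omega : 8 ≤ N1)
      linarith
    apply mul_right_cancel₀ hne2
    rw [hmain]
    ring
  rw [hΓdef] at hfinal
  rw [hfinal]
  have hcast : ((N1 : ℕ) : ℝ) = 2 ^ (n - 1) := by
    rw [hN1def]; push_cast; ring
  have hcast2 : (2 : ℝ) ^ n = 2 * 2 ^ (n - 1) := by
    rw [← pow_succ']
    congr 1
    omega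
  rw [hcast, hcast2]
  ring
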